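/- Let K ⊆ ℝ^n be a convex body and φ: K → (0,∞) continuous. Then the support function h_{M_δ(K,φ)}(θ), viewed as a function of (θ,δ) ∈ S^{n-1} × (0, ∫_K φ], extends continuously to δ = 0 with h_{M_0(K,φ)} = h_K, the support function of K. -/

import Mathlib

open MeasureTheory Metric Set
open scoped RealInnerProductSpace ENNReal Topology Pointwise

noncomputable def metronoid {n : ℕ} (μ : Measure (EuclideanSpace ℝ (Fin n))) :
    Set (EuclideanSpace ℝ (Fin n)) :=
  {z | ∃ f : EuclideanSpace ℝ (Fin n) → ℝ,
    (∀ y, 0 ≤ f y ∧ f y ≤ 1) ∧ Integrable f μ ∧ (∫ y, f y ∂μ) = 1 ∧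
    Integrable (fun y => f y • y) μ ∧ z = ∫ y, f y • y ∂μ}

/-- The weighted Ulam floating body `M_δ(K, φ)`. -/
noncomputable def ulamW {n : ℕ} (K : Set (EuclideanSpace ℝ (Fin n)))
    (φ : EuclideanSpace ℝ (Fin n) → ℝ) (δ : ℝ) : Set (EuclideanSpace ℝ (Fin n)) :=
  metronoid ((volume.restrict K).withDensity fun x => ENNReal.ofReal (φ x / δ))

/-- The support function of a set `L` in direction `θ`. -/
noncomputable def suppFn {n : ℕ} (L : Set (EuclideanSpace ℝ (Fin n)))
    (θ : EuclideanSpace ℝ (Fin n)) : ℝ :=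
  sSup ((fun x => ⟪x, θ⟫) '' L)

variable {n : ℕ}

noncomputable def nuM (K : Set (EuclideanSpace ℝ (Fin n)))
    (φ : EuclideanSpace ℝ (Fin n) → ℝ) : Measure (EuclideanSpace ℝ (Fin n)) :=
  (volume.restrict K).withDensity fun x => ENNReal.ofReal (φ x)

theorem nuM_scale (K : Set (EuclideanSpace ℝ (Fin n)))
    (φ : EuclideanSpace ℝ (Fin n) → ℝ) {δ : ℝ} (hδ : 0 < δ) :
    ((volume.restrict K).withDensity fun x => ENNReal.ofReal (φ x / δ))
      = (ENNReal.ofReal δ)⁻¹ • nuM K φ := by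
  have h1 : (fun x => ENNReal.ofReal (φ x / δ))
      = (ENNReal.ofReal δ)⁻¹ • fun x => ENNReal.ofReal (φ x) := by
    funext x
    simp only [Pi.smul_apply, smul_eq_mul]
    rw [div_eq_inv_mul, ENNReal.ofReal_mul (by positivity), ENNReal.ofReal_inv_of_pos hδ]
  rw [h1, withDensity_smul' _ _ (by simp [ENNReal.ofReal_eq_zero, hδ, not_le, ENNReal.inv_ne_top])]
  rfl

theorem ulamW_eq (K : Set (EuclideanSpace ℝ (Fin n)))
    (φ : EuclideanSpace ℝ (Fin n) → ℝ) {δ : ℝ} (hδ : 0 < δ) :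
    ulamW K φ δ = {z | ∃ f : EuclideanSpace ℝ (Fin n) → ℝ,
      (∀ y, 0 ≤ f y ∧ f y ≤ 1) ∧ Integrable f (nuM K φ) ∧ (∫ y, f y ∂(nuM K φ)) = δ ∧
      Integrable (fun y => f y • y) (nuM K φ) ∧ z = δ⁻¹ • ∫ y, f y • y ∂(nuM K φ)} := by
  have hc0 : (ENNReal.ofReal δ)⁻¹ ≠ 0 := by simp [ENNReal.ofReal_lt_top.ne]
  have hct : (ENNReal.ofReal δ)⁻¹ ≠ ∞ := by simp [ENNReal.ofReal_eq_zero, not_le, hδ]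
  have hcr : ((ENNReal.ofReal δ)⁻¹).toReal = δ⁻¹ := by
    rw [ENNReal.toReal_inv, ENNReal.toReal_ofReal hδ.le]
  unfold ulamW metronoid
  rw [nuM_scale K φ hδ]
  ext z
  simp only [Set.mem_setOf_eq]
  constructor
  · rintro ⟨f, hb, hint, hmass, hint2, hz⟩
    rw [integrable_smul_measure hc0 hct] at hint hint2
    rw [integral_smul_measure, hcr, smul_eq_mul] at hmass
    rw [integral_smul_measure, hcr] at hz
    refine ⟨f, hb, hint, ?_, hint2, hz⟩
    field_simp at hmass
    linarith [hmass]
  · rintro ⟨f, hb, hint, hmass, hint2, hz⟩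
    refine ⟨f, hb, (integrable_smul_measure hc0 hct).2 hint, ?_,
      (integrable_smul_measure hc0 hct).2 hint2, ?_⟩
    · rw [integral_smul_measure, hcr, smul_eq_mul, hmass, inv_mul_cancel₀ hδ.ne']
    · rw [integral_smul_measure, hcr, hz]

section Main
variable {K : Set (EuclideanSpace ℝ (Fin n))} {φ : EuclideanSpace ℝ (Fin n) → ℝ}

theorem nuM_ae_mem (hKm : MeasurableSet K) : ∀ᵐ y ∂(nuM K φ), y ∈ K :=
  (withDensity_absolutelyContinuous _ _).ae_le (ae_restrict_mem hKm)

theorem nuM_univ (hK : IsCompact K) (hφpos : ∀ x ∈ K, 0 ≤ φ x)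
    (hφcont : ContinuousOn φ K) :
    nuM K φ Set.univ = ENNReal.ofReal (∫ x in K, φ x) := by
  have hInt : IntegrableOn φ K := hφcont.integrableOn_compact hK
  have hnn : 0 ≤ᵐ[volume.restrict K] φ :=
    (ae_restrict_mem hK.measurableSet).mono fun x hx => hφpos x hx
  rw [nuM, withDensity_apply _ MeasurableSet.univ, Measure.restrict_univ,
    ← ofReal_integral_eq_lintegral_ofReal hInt hnn]

theorem nuM_finite (hK : IsCompact K) (hφpos : ∀ x ∈ K, 0 ≤ φ x)
    (hφcont : ContinuousOn φ K) : IsFiniteMeasure (nuM K φ) := by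
  constructor
  rw [nuM_univ hK hφpos hφcont]
  exact ENNReal.ofReal_lt_top

end Main

section Main2
variable {K : Set (EuclideanSpace ℝ (Fin n))} {φ : EuclideanSpace ℝ (Fin n) → ℝ}
  {f : EuclideanSpace ℝ (Fin n) → ℝ} {R : ℝ} {θ : EuclideanSpace ℝ (Fin n)} {δ : ℝ}

theorem int_bdd (hK : IsCompact K) (hφpos : ∀ x ∈ K, 0 ≤ φ x) (hφcont : ContinuousOn φ K)
    (hf : AEStronglyMeasurable f (nuM K φ)) (hb : ∀ y, 0 ≤ f y ∧ f y ≤ 1) :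
    Integrable f (nuM K φ) := by
  haveI := nuM_finite hK hφpos hφcont
  exact (integrable_const (1:ℝ)).mono' hf (Filter.Eventually.of_forall fun y => by
    rw [Real.norm_eq_abs, abs_of_nonneg (hb y).1]; exact (hb y).2)

theorem int_smul (hK : IsCompact K) (hφpos : ∀ x ∈ K, 0 ≤ φ x) (hφcont : ContinuousOn φ K)
    (hR : K ⊆ closedBall 0 R)
    (hf : AEStronglyMeasurable f (nuM K φ)) (hb : ∀ y, 0 ≤ f y ∧ f y ≤ 1) :
    Integrable (fun y => f y • y) (nuM K φ) := by
  haveI := nuM_finite hK hφpos hφcont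
  refine (integrable_const R).mono' (hf.smul aestronglyMeasurable_id) ?_
  filter_upwards [nuM_ae_mem hK.measurableSet] with y hy
  rw [norm_smul, Real.norm_eq_abs, abs_of_nonneg (hb y).1]
  have h1 : ‖y‖ ≤ R := by simpa [mem_closedBall, dist_zero_right] using hR hy
  nlinarith [(hb y).1, (hb y).2, norm_nonneg y]

theorem int_mulinner {μ : Measure (EuclideanSpace ℝ (Fin n))}
    (hf2 : Integrable (fun y => f y • y) μ) :
    Integrable (fun y => f y * ⟪y, θ⟫) μ := by
  have h := (innerSL ℝ θ).integrable_comp hf2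
  have : (fun y => (innerSL ℝ θ) (f y • y)) = fun y => f y * ⟪y, θ⟫ := by
    funext y; simp [inner_smul_right, real_inner_comm, mul_comm]
  rwa [this] at h

theorem inner_point {μ : Measure (EuclideanSpace ℝ (Fin n))}
    (hf2 : Integrable (fun y => f y • y) μ) :
    ⟪δ⁻¹ • ∫ y, f y • y ∂μ, θ⟫ = δ⁻¹ * ∫ y, f y * ⟪y, θ⟫ ∂μ := by
  rw [real_inner_smul_left, real_inner_comm, ← integral_inner hf2 θ]
  congr 1
  refine integral_congr_ae (Filter.Eventually.of_forall fun y => ?_)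
  simp [inner_smul_right, real_inner_comm, mul_comm]

end Main2

section Main3
variable {K : Set (EuclideanSpace ℝ (Fin n))} {φ : EuclideanSpace ℝ (Fin n) → ℝ}
  {f : EuclideanSpace ℝ (Fin n) → ℝ} {R : ℝ} {θ θ' : EuclideanSpace ℝ (Fin n)} {δ δ' : ℝ}

theorem cont_inner : Continuous (fun x : EuclideanSpace ℝ (Fin n) => ⟪x, θ⟫) :=
  continuous_id.inner continuous_const

theorem norm_le_of_mem (hK : IsCompact K) (hR : K ⊆ closedBall 0 R)
    (hφpos : ∀ x ∈ K, 0 ≤ φ x) (hφcont : ContinuousOn φ K)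
    (hδ : 0 < δ) {z : EuclideanSpace ℝ (Fin n)} (hz : z ∈ ulamW K φ δ) : ‖z‖ ≤ R := by
  rw [ulamW_eq K φ hδ] at hz
  obtain ⟨f, hb, hint, hmass, hint2, rfl⟩ := hz
  have key : ‖∫ y, f y • y ∂(nuM K φ)‖ ≤ δ * R := by
    calc ‖∫ y, f y • y ∂(nuM K φ)‖ ≤ ∫ y, ‖f y • y‖ ∂(nuM K φ) :=
          norm_integral_le_integral_norm _
      _ ≤ ∫ y, f y * R ∂(nuM K φ) := by
          refine integral_mono_ae hint2.norm (hint.mul_const R) ?_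
          filter_upwards [nuM_ae_mem hK.measurableSet] with y hy
          have h1 : ‖y‖ ≤ R := by simpa [mem_closedBall, dist_zero_right] using hR hy
          rw [norm_smul, Real.norm_eq_abs, abs_of_nonneg (hb y).1]
          nlinarith [(hb y).1, (hb y).2, norm_nonneg y]
      _ = δ * R := by rw [integral_mul_const, hmass]
  rw [norm_smul, Real.norm_eq_abs, abs_of_nonneg (inv_nonneg.2 hδ.le)]
  calc δ⁻¹ * ‖∫ y, f y • y ∂(nuM K φ)‖ ≤ δ⁻¹ * (δ * R) := by
        exact mul_le_mul_of_nonneg_left key (inv_nonneg.2 hδ.le)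
    _ = R := by field_simp

theorem suppFn_mem_le (hK : IsCompact K) {y : EuclideanSpace ℝ (Fin n)} (hy : y ∈ K) :
    ⟪y, θ⟫ ≤ suppFn K θ :=
  le_csSup ((hK.image cont_inner).bddAbove) (Set.mem_image_of_mem _ hy)

theorem suppFn_le (hne : K.Nonempty) {a : ℝ} (h : ∀ y ∈ K, ⟪y, θ⟫ ≤ a) :
    suppFn K θ ≤ a := by
  refine csSup_le (hne.image _) ?_
  rintro - ⟨y, hy, rfl⟩; exact h y hy

theorem suppFn_K_lipschitz (hK : IsCompact K) (hne : K.Nonempty) (hR : K ⊆ closedBall 0 R) :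
    suppFn K θ ≤ suppFn K θ' + R * ‖θ - θ'‖ := by
  refine suppFn_le hne fun y hy => ?_
  have h1 : ‖y‖ ≤ R := by simpa [mem_closedBall, dist_zero_right] using hR hy
  have h2 : ⟪y, θ⟫ - ⟪y, θ'⟫ ≤ R * ‖θ - θ'‖ := by
    rw [← inner_sub_right]
    calc ⟪y, θ - θ'⟫ ≤ ‖y‖ * ‖θ - θ'‖ := real_inner_le_norm _ _
      _ ≤ R * ‖θ - θ'‖ := by nlinarith [norm_nonneg (θ - θ'), norm_nonneg y]
  linarith [suppFn_mem_le hK hy (θ := θ')]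

end Main3

section Main4
variable {K : Set (EuclideanSpace ℝ (Fin n))} {φ : EuclideanSpace ℝ (Fin n) → ℝ}
  {R : ℝ} {θ θ' : EuclideanSpace ℝ (Fin n)} {δ δ' : ℝ}

theorem ulam_bddAbove (hK : IsCompact K) (hR : K ⊆ closedBall 0 R)
    (hφpos : ∀ x ∈ K, 0 ≤ φ x) (hφcont : ContinuousOn φ K) (hδ : 0 < δ) :
    BddAbove ((fun x => ⟪x, θ⟫) '' ulamW K φ δ) := by
  refine ⟨R * ‖θ‖, ?_⟩
  rintro - ⟨z, hz, rfl⟩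
  calc ⟪z, θ⟫ ≤ ‖z‖ * ‖θ‖ := real_inner_le_norm _ _
    _ ≤ R * ‖θ‖ := by
        have := norm_le_of_mem hK hR hφpos hφcont hδ hz
        nlinarith [norm_nonneg θ, norm_nonneg z]

theorem ulam_nonempty (hK : IsCompact K) (hR : K ⊆ closedBall 0 R)
    (hKi : (interior K).Nonempty)
    (hφpos : ∀ x ∈ K, 0 < φ x) (hφcont : ContinuousOn φ K)
    (hδ : 0 < δ) (hδM : δ ≤ ∫ x in K, φ x) : (ulamW K φ δ).Nonempty := by
  set M := ∫ x in K, φ x with hM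
  have hMpos : 0 < M := by
    have hInt : IntegrableOn φ K := hφcont.integrableOn_compact hK
    have hnn : 0 ≤ᵐ[volume.restrict K] φ :=
      (ae_restrict_mem hK.measurableSet).mono fun x hx => (hφpos x hx).le
    rw [hM, setIntegral_pos_iff_support_of_nonneg_ae hnn hInt]
    calc (0 : ℝ≥0∞) < volume (interior K) :=
          isOpen_interior.measure_pos volume hKi
      _ ≤ volume (Function.support φ ∩ K) := measure_mono fun x hx =>
          ⟨fun h => (hφpos x (interior_subset hx)).ne' h, interior_subset hx⟩
  haveI := nuM_finite hK (fun x hx => (hφpos x hx).le) hφcont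
  have htot : (nuM K φ Set.univ).toReal = M := by
    rw [nuM_univ hK (fun x hx => (hφpos x hx).le) hφcont, ENNReal.toReal_ofReal hMpos.le]
  set g : EuclideanSpace ℝ (Fin n) → ℝ := fun _ => δ / M with hg
  have hb : ∀ y, 0 ≤ g y ∧ g y ≤ 1 := fun y =>
    ⟨div_nonneg hδ.le hMpos.le, (div_le_one hMpos).2 hδM⟩
  have hint : Integrable g (nuM K φ) := integrable_const _
  have hmass : (∫ y, g y ∂(nuM K φ)) = δ := by
    rw [hg, integral_const, measureReal_def, htot, smul_eq_mul]; field_simp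
  have hint2 : Integrable (fun y => g y • y) (nuM K φ) :=
    int_smul hK (fun x hx => (hφpos x hx).le) hφcont hR aestronglyMeasurable_const hb
  refine ⟨δ⁻¹ • ∫ y, g y • y ∂(nuM K φ), ?_⟩
  rw [ulamW_eq K φ hδ]
  exact ⟨g, hb, hint, hmass, hint2, rfl⟩

theorem Hfun_le_suppK (hK : IsCompact K) (hR : K ⊆ closedBall 0 R)
    (hKi : (interior K).Nonempty)
    (hφpos : ∀ x ∈ K, 0 < φ x) (hφcont : ContinuousOn φ K)
    (hδ : 0 < δ) (hδM : δ ≤ ∫ x in K, φ x) :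
    suppFn (ulamW K φ δ) θ ≤ suppFn K θ := by
  have hφ0 : ∀ x ∈ K, 0 ≤ φ x := fun x hx => (hφpos x hx).le
  refine csSup_le (((ulam_nonempty hK hR hKi hφpos hφcont hδ hδM)).image _) ?_
  rintro - ⟨z, hz, rfl⟩
  rw [ulamW_eq K φ hδ] at hz
  obtain ⟨f, hb, hint, hmass, hint2, rfl⟩ := hz
  dsimp only
  rw [inner_point hint2]
  have key : (∫ y, f y * ⟪y, θ⟫ ∂(nuM K φ)) ≤ δ * suppFn K θ := by
    calc (∫ y, f y * ⟪y, θ⟫ ∂(nuM K φ)) ≤ ∫ y, f y * suppFn K θ ∂(nuM K φ) := by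
          refine integral_mono_ae (int_mulinner hint2) (hint.mul_const _) ?_
          filter_upwards [nuM_ae_mem hK.measurableSet] with y hy
          exact mul_le_mul_of_nonneg_left (suppFn_mem_le hK hy) (hb y).1
      _ = δ * suppFn K θ := by rw [integral_mul_const, hmass]
  calc δ⁻¹ * (∫ y, f y * ⟪y, θ⟫ ∂(nuM K φ)) ≤ δ⁻¹ * (δ * suppFn K θ) :=
        mul_le_mul_of_nonneg_left key (inv_nonneg.2 hδ.le)
    _ = suppFn K θ := by field_simp

end Main4

section Main5
variable {K : Set (EuclideanSpace ℝ (Fin n))} {φ : EuclideanSpace ℝ (Fin n) → ℝ}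
  {R : ℝ} {θ θ' : EuclideanSpace ℝ (Fin n)} {δ δ' : ℝ}

theorem ulamW_antitone (hδ' : 0 < δ') (hle : δ' ≤ δ) :
    ulamW K φ δ ⊆ ulamW K φ δ' := by
  have hδ : 0 < δ := hδ'.trans_le hle
  intro z hz
  rw [ulamW_eq K φ hδ] at hz
  rw [ulamW_eq K φ hδ']
  obtain ⟨f, hb, hint, hmass, hint2, rfl⟩ := hz
  set c := δ' / δ with hc
  have hc0 : 0 ≤ c := div_nonneg hδ'.le hδ.le
  have hc1 : c ≤ 1 := (div_le_one hδ).2 hle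
  refine ⟨fun y => c * f y, fun y => ⟨mul_nonneg hc0 (hb y).1, ?_⟩, hint.const_mul c, ?_, ?_, ?_⟩
  · show c * f y ≤ 1
    nlinarith [(hb y).1, (hb y).2]
  · rw [integral_const_mul, hmass, hc]; field_simp
  · have hrw : (fun y => (c * f y) • y) = fun y => c • (f y • y) :=
      funext fun y => (smul_smul c (f y) y).symm
    rw [hrw]
    exact hint2.smul c
  · have hrw : (fun y => (c * f y) • y) = fun y => c • (f y • y) :=
      funext fun y => (smul_smul c (f y) y).symm
    rw [hrw, integral_smul, smul_smul, hc]
    congr 1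
    field_simp

theorem H_mono (hK : IsCompact K) (hR : K ⊆ closedBall 0 R)
    (hKi : (interior K).Nonempty)
    (hφpos : ∀ x ∈ K, 0 < φ x) (hφcont : ContinuousOn φ K)
    (hδ' : 0 < δ') (hle : δ' ≤ δ) (hδM : δ ≤ ∫ x in K, φ x) :
    suppFn (ulamW K φ δ) θ ≤ suppFn (ulamW K φ δ') θ := by
  have hφ0 : ∀ x ∈ K, 0 ≤ φ x := fun x hx => (hφpos x hx).le
  exact csSup_le_csSup (ulam_bddAbove hK hR hφ0 hφcont hδ')
    ((ulam_nonempty hK hR hKi hφpos hφcont (hδ'.trans_le hle) hδM).image _)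
    (Set.image_mono (ulamW_antitone hδ' hle))

theorem H_lipθ (hK : IsCompact K) (hR : K ⊆ closedBall 0 R)
    (hKi : (interior K).Nonempty)
    (hφpos : ∀ x ∈ K, 0 < φ x) (hφcont : ContinuousOn φ K)
    (hδ : 0 < δ) (hδM : δ ≤ ∫ x in K, φ x) :
    suppFn (ulamW K φ δ) θ ≤ suppFn (ulamW K φ δ) θ' + R * ‖θ - θ'‖ := by
  have hφ0 : ∀ x ∈ K, 0 ≤ φ x := fun x hx => (hφpos x hx).le
  refine csSup_le (((ulam_nonempty hK hR hKi hφpos hφcont hδ hδM)).image _) ?_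
  rintro - ⟨z, hz, rfl⟩
  have hzR : ‖z‖ ≤ R := norm_le_of_mem hK hR hφ0 hφcont hδ hz
  have h2 : ⟪z, θ⟫ - ⟪z, θ'⟫ ≤ R * ‖θ - θ'‖ := by
    rw [← inner_sub_right]
    calc ⟪z, θ - θ'⟫ ≤ ‖z‖ * ‖θ - θ'‖ := real_inner_le_norm _ _
      _ ≤ R * ‖θ - θ'‖ := by nlinarith [norm_nonneg (θ - θ'), norm_nonneg z]
  have h3 : ⟪z, θ'⟫ ≤ suppFn (ulamW K φ δ) θ' :=
    le_csSup (ulam_bddAbove hK hR hφ0 hφcont hδ) (Set.mem_image_of_mem _ hz)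
  simp only
  linarith

end Main5

section Main6
variable {K : Set (EuclideanSpace ℝ (Fin n))} {φ : EuclideanSpace ℝ (Fin n) → ℝ}
  {R : ℝ} {θ : EuclideanSpace ℝ (Fin n)} {δ δ' : ℝ}

theorem int_inner' (hK : IsCompact K) (hφpos : ∀ x ∈ K, 0 ≤ φ x)
    (hφcont : ContinuousOn φ K) (hR : K ⊆ closedBall 0 R) :
    Integrable (fun y => ⟪y, θ⟫) (nuM K φ) := by
  haveI := nuM_finite hK hφpos hφcont
  refine (integrable_const (R * ‖θ‖)).mono' cont_inner.aestronglyMeasurable ?_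
  filter_upwards [nuM_ae_mem hK.measurableSet] with y hy
  have h1 : ‖y‖ ≤ R := by simpa [mem_closedBall, dist_zero_right] using hR hy
  rw [Real.norm_eq_abs]
  calc |⟪y, θ⟫| ≤ ‖y‖ * ‖θ‖ := abs_real_inner_le_norm _ _
    _ ≤ R * ‖θ‖ := by nlinarith [norm_nonneg θ, norm_nonneg y]

theorem H_incr (hK : IsCompact K) (hR : K ⊆ closedBall 0 R)
    (hKi : (interior K).Nonempty)
    (hφpos : ∀ x ∈ K, 0 < φ x) (hφcont : ContinuousOn φ K)
    (hθ : ‖θ‖ = 1) (hδ : 0 < δ) (hle : δ ≤ δ') (hδ'M : δ' ≤ ∫ x in K, φ x) :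
    suppFn (ulamW K φ δ) θ ≤ suppFn (ulamW K φ δ') θ + 2 * R * (δ' - δ) / δ' := by
  have hφ0 : ∀ x ∈ K, 0 ≤ φ x := fun x hx => (hφpos x hx).le
  haveI := nuM_finite hK hφ0 hφcont
  set M := ∫ x in K, φ x with hM
  have hδ' : 0 < δ' := hδ.trans_le hle
  rcases eq_or_lt_of_le hle with heq | hlt
  · subst heq
    simp only [sub_self, mul_zero, zero_div, add_zero, le_refl]
  have hδM : δ < M := lt_of_lt_of_le hlt hδ'M
  have hMpos : 0 < M := hδ.trans hδM
  have htot : (nuM K φ Set.univ).toReal = M := by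
    rw [nuM_univ hK hφ0 hφcont, ENNReal.toReal_ofReal hMpos.le]
  refine csSup_le ((ulam_nonempty hK hR hKi hφpos hφcont hδ (hle.trans hδ'M)).image _) ?_
  rintro - ⟨z, hz, rfl⟩
  rw [ulamW_eq K φ hδ] at hz
  obtain ⟨f, hb, hint, hmass, hint2, rfl⟩ := hz
  simp only
  set t : ℝ := ⟪δ⁻¹ • ∫ y, f y • y ∂(nuM K φ), θ⟫ with ht
  have htval : (∫ y, f y * ⟪y, θ⟫ ∂(nuM K φ)) = δ * t := by
    rw [ht, inner_point hint2]; field_simp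
  have htR : |t| ≤ R := by
    rw [ht]
    calc |⟪δ⁻¹ • ∫ y, f y • y ∂(nuM K φ), θ⟫| ≤
          ‖δ⁻¹ • ∫ y, f y • y ∂(nuM K φ)‖ * ‖θ‖ := abs_real_inner_le_norm _ _
      _ ≤ R := by
          rw [hθ, mul_one]
          refine norm_le_of_mem hK hR hφ0 hφcont hδ ?_
          rw [ulamW_eq K φ hδ]
          exact ⟨f, hb, hint, hmass, hint2, rfl⟩
  set c := (δ' - δ) / (M - δ) with hc
  have hMδ : 0 < M - δ := by linarith
  have hc0 : 0 ≤ c := div_nonneg (by linarith) hMδ.le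
  have hc1 : c ≤ 1 := (div_le_one hMδ).2 (by linarith)
  have hcMδ : c * (M - δ) = δ' - δ := by
    rw [hc]; exact div_mul_cancel₀ _ hMδ.ne'
  set g : EuclideanSpace ℝ (Fin n) → ℝ := fun y => f y + (c - c * f y) with hg
  have hgb : ∀ y, 0 ≤ g y ∧ g y ≤ 1 := by
    intro y
    have h1 := (hb y).1; have h2 := (hb y).2
    constructor
    · show (0:ℝ) ≤ f y + (c - c * f y); nlinarith
    · show f y + (c - c * f y) ≤ 1; nlinarith
  have hint3 : Integrable (fun y => c - c * f y) (nuM K φ) :=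
    (integrable_const c).sub (hint.const_mul c)
  have hgint : Integrable g (nuM K φ) := hint.add hint3
  have hgmass : (∫ y, g y ∂(nuM K φ)) = δ' := by
    rw [hg]
    rw [integral_add hint hint3, integral_sub (integrable_const c) (hint.const_mul c),
      integral_const, integral_const_mul, hmass, measureReal_def, htot, smul_eq_mul]
    linarith [hcMδ]
  have hgint2 : Integrable (fun y => g y • y) (nuM K φ) :=
    int_smul hK hφ0 hφcont hR hgint.aestronglyMeasurable hgb
  have hmem : (δ'⁻¹ • ∫ y, g y • y ∂(nuM K φ)) ∈ ulamW K φ δ' := by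
    rw [ulamW_eq K φ hδ']
    exact ⟨g, hgb, hgint, hgmass, hgint2, rfl⟩
  have hsup : ⟪δ'⁻¹ • ∫ y, g y • y ∂(nuM K φ), θ⟫ ≤ suppFn (ulamW K φ δ') θ :=
    le_csSup (ulam_bddAbove hK hR hφ0 hφcont hδ') (Set.mem_image_of_mem _ hmem)
  -- lower bound the value of the augmented density
  have hint4 : Integrable (fun y => (c - c * f y) * ⟪y, θ⟫) (nuM K φ) := by
    have h5 : Integrable (fun y => c * ⟪y, θ⟫) (nuM K φ) :=
      (int_inner' hK hφ0 hφcont hR).const_mul c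
    have h6 : Integrable (fun y => c * (f y * ⟪y, θ⟫)) (nuM K φ) :=
      (int_mulinner hint2).const_mul c
    have hrw : (fun y => (c - c * f y) * ⟪y, θ⟫)
        = fun y => c * ⟪y, θ⟫ - c * (f y * ⟪y, θ⟫) := by funext y; ring
    rw [hrw]; exact h5.sub h6
  have hbound : (∫ y, (c - c * f y) * ⟪y, θ⟫ ∂(nuM K φ)) ≥ -((δ' - δ) * R) := by
    have step : (∫ y, -((c - c * f y) * R) ∂(nuM K φ))
        ≤ ∫ y, (c - c * f y) * ⟪y, θ⟫ ∂(nuM K φ) := by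
      refine integral_mono_ae (hint3.mul_const R).neg hint4 ?_
      filter_upwards [nuM_ae_mem hK.measurableSet] with y hy
      have h1 : ‖y‖ ≤ R := by simpa [mem_closedBall, dist_zero_right] using hR hy
      have h2 : |⟪y, θ⟫| ≤ R := by
        calc |⟪y, θ⟫| ≤ ‖y‖ * ‖θ‖ := abs_real_inner_le_norm _ _
          _ ≤ R := by rw [hθ, mul_one]; exact h1
      have h3 : 0 ≤ c - c * f y := by nlinarith [(hb y).1, (hb y).2]
      have h4 : -R ≤ ⟪y, θ⟫ := neg_le_of_abs_le h2
      nlinarith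
    have hval : (∫ y, -((c - c * f y) * R) ∂(nuM K φ)) = -((δ' - δ) * R) := by
      rw [integral_neg, integral_mul_const,
        integral_sub (integrable_const c) (hint.const_mul c),
        integral_const, integral_const_mul, hmass, measureReal_def, htot, smul_eq_mul]
      linear_combination (-R) * hcMδ
    linarith [step, hval.ge, hval.le]
  have hval2 : ⟪δ'⁻¹ • ∫ y, g y • y ∂(nuM K φ), θ⟫
      = δ'⁻¹ * (δ * t + ∫ y, (c - c * f y) * ⟪y, θ⟫ ∂(nuM K φ)) := by
    rw [inner_point hgint2]
    congr 1
    have hrw : (fun y => g y * ⟪y, θ⟫)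
        = fun y => f y * ⟪y, θ⟫ + (c - c * f y) * ⟪y, θ⟫ := by
      funext y; rw [hg]; ring
    rw [hrw, integral_add (int_mulinner hint2) hint4, htval]
  have hfinal : δ'⁻¹ * (δ * t - (δ' - δ) * R)
      ≤ suppFn (ulamW K φ δ') θ := by
    refine le_trans ?_ hsup
    rw [hval2]
    have := mul_le_mul_of_nonneg_left
      (by linarith [hbound] : δ * t - (δ' - δ) * R ≤ δ * t + ∫ y, (c - c * f y) * ⟪y, θ⟫ ∂(nuM K φ))
      (inv_nonneg.2 hδ'.le)
    linarith
  -- conclude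
  have habs1 : t ≤ R := le_of_abs_le htR
  have habs2 : -R ≤ t := neg_le_of_abs_le htR
  have hkey : t * δ' ≤ suppFn (ulamW K φ δ') θ * δ' + 2 * R * (δ' - δ) := by
    have h7 : δ * t - (δ' - δ) * R ≤ suppFn (ulamW K φ δ') θ * δ' := by
      rw [inv_mul_eq_div] at hfinal
      exact (div_le_iff₀ hδ').1 hfinal
    linarith [mul_le_mul_of_nonneg_left habs1 (by linarith : (0:ℝ) ≤ δ' - δ)]
  have h8 : t ≤ (suppFn (ulamW K φ δ') θ * δ' + 2 * R * (δ' - δ)) / δ' :=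
    (le_div_iff₀ hδ').2 hkey
  have h9 : (suppFn (ulamW K φ δ') θ * δ' + 2 * R * (δ' - δ)) / δ'
      = suppFn (ulamW K φ δ') θ + 2 * R * (δ' - δ) / δ' := by
    field_simp
  linarith
end Main6

section Main7
variable {K : Set (EuclideanSpace ℝ (Fin n))} {φ : EuclideanSpace ℝ (Fin n) → ℝ}
  {R : ℝ} {θ₀ : EuclideanSpace ℝ (Fin n)}

theorem H_cap (hK : IsCompact K) (hKc : Convex ℝ K) (hKi : (interior K).Nonempty)
    (hφpos : ∀ x ∈ K, 0 < φ x) (hφcont : ContinuousOn φ K)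
    (hR : K ⊆ closedBall 0 R) (hθ₀ : ‖θ₀‖ = 1) {ε : ℝ} (hε : 0 < ε) :
    ∃ r > (0:ℝ), ∃ c > (0:ℝ), ∀ θ : EuclideanSpace ℝ (Fin n), ‖θ - θ₀‖ ≤ r →
      ∀ δ : ℝ, 0 < δ → δ ≤ c →
        suppFn K θ₀ - ε ≤ suppFn (ulamW K φ δ) θ := by
  have hφ0 : ∀ x ∈ K, 0 ≤ φ x := fun x hx => (hφpos x hx).le
  haveI := nuM_finite hK hφ0 hφcont
  have hne : K.Nonempty := hKi.mono interior_subset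
  have hR0 : 0 ≤ R := by
    obtain ⟨x, hx⟩ := hne
    have := hR hx
    simp only [mem_closedBall, dist_zero_right] at this
    linarith [norm_nonneg x]
  -- maximizer
  obtain ⟨xs, hxs, hmax⟩ := hK.exists_isMaxOn hne
    (cont_inner (θ := θ₀)).continuousOn
  have hstar : suppFn K θ₀ = ⟪xs, θ₀⟫ :=
    le_antisymm (suppFn_le hne fun y hy => hmax hy) (suppFn_mem_le hK hxs)
  obtain ⟨z₀, hz₀⟩ := hKi
  -- pick s
  set D := |⟪z₀, θ₀⟫ - ⟪xs, θ₀⟫| with hD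
  have hD0 : 0 ≤ D := abs_nonneg _
  set s : ℝ := min 1 (ε / (2 * (D + 1))) with hs
  have hs0 : 0 < s := lt_min one_pos (by positivity)
  have hs1 : s ≤ 1 := min_le_left _ _
  set w := s • z₀ + (1 - s) • xs with hw
  have hwint : w ∈ interior K :=
    hKc.combo_interior_self_mem_interior hz₀ hxs hs0 (by linarith) (by ring)
  have hwin : ⟪w, θ₀⟫ ≥ suppFn K θ₀ - ε / 2 := by
    have hval : ⟪w, θ₀⟫ = ⟪xs, θ₀⟫ + s * (⟪z₀, θ₀⟫ - ⟪xs, θ₀⟫) := by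
      rw [hw, inner_add_left, real_inner_smul_left, real_inner_smul_left]; ring
    have hsD : s * D ≤ ε / 2 := by
      have h1 : s ≤ ε / (2 * (D + 1)) := min_le_right _ _
      have h2 : s * D ≤ (ε / (2 * (D + 1))) * D :=
        mul_le_mul_of_nonneg_right h1 hD0
      have h3 : (ε / (2 * (D + 1))) * D ≤ ε / 2 := by
        rw [div_mul_eq_mul_div, div_le_div_iff₀ (by positivity) (by positivity)]
        nlinarith
      linarith
    have h4 : s * (⟪z₀, θ₀⟫ - ⟪xs, θ₀⟫) ≥ -(s * D) := by
      have := neg_abs_le (⟪z₀, θ₀⟫ - ⟪xs, θ₀⟫)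
      nlinarith [hs0.le]
    rw [hval, hstar]
    linarith
  -- small closed ball inside interior K
  obtain ⟨ρ₀, hρ₀, hball⟩ := Metric.isOpen_iff.1 isOpen_interior w hwint
  set ρ : ℝ := min (ρ₀ / 2) (ε / 4) with hρ
  have hρpos : 0 < ρ := lt_min (by linarith) (by linarith)
  set B := closedBall w ρ with hB
  have hBK : B ⊆ K := fun y hy => interior_subset (hball
    (lt_of_le_of_lt (mem_closedBall.1 hy) (by
      have : ρ ≤ ρ₀ / 2 := min_le_left _ _
      linarith)))
  -- ν B is positive
  have hmin : ∃ m > (0:ℝ), ∀ y ∈ B, m ≤ φ y := by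
    obtain ⟨p, hp, hpmin⟩ := (isCompact_closedBall w ρ).exists_isMinOn
      (Metric.nonempty_closedBall.2 hρpos.le) (hφcont.mono hBK)
    exact ⟨φ p, hφpos p (hBK hp), fun y hy => hpmin hy⟩
  obtain ⟨m, hm0, hmB⟩ := hmin
  have hνB : 0 < nuM K φ B := by
    have h1 : nuM K φ B = ∫⁻ y in B, ENNReal.ofReal (φ y) ∂(volume.restrict K) := by
      rw [nuM, withDensity_apply _ measurableSet_closedBall]
    rw [h1, Measure.restrict_restrict measurableSet_closedBall,
      Set.inter_eq_self_of_subset_left hBK]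
    calc (0:ℝ≥0∞) < ENNReal.ofReal m * volume B := by
          refine ENNReal.mul_pos ?_ ?_
          · simp [ENNReal.ofReal_eq_zero, not_le, hm0]
          · exact (measure_closedBall_pos volume w hρpos).ne'
      _ = ∫⁻ _ in B, ENNReal.ofReal m ∂volume := by rw [setLIntegral_const]
      _ ≤ ∫⁻ y in B, ENNReal.ofReal (φ y) ∂volume := by
          refine setLIntegral_mono_ae' measurableSet_closedBall ?_
          exact Filter.Eventually.of_forall fun y hy => ENNReal.ofReal_le_ofReal (hmB y hy)
  set cB : ℝ := (nuM K φ B).toReal with hcB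
  have hcB0 : 0 < cB := ENNReal.toReal_pos hνB.ne' (measure_ne_top _ _)
  -- the radius in θ
  refine ⟨ε / (4 * (R + 1)), by positivity, cB, hcB0, ?_⟩
  intro θ hθr δ hδ hδc
  -- inner products on B are large
  have hBlow : ∀ y ∈ B, suppFn K θ₀ - ε ≤ ⟪y, θ⟫ := by
    intro y hy
    have hyK : y ∈ K := hBK hy
    have hyR : ‖y‖ ≤ R := by simpa [mem_closedBall, dist_zero_right] using hR hyK
    have h1 : ⟪y, θ₀⟫ ≥ ⟪w, θ₀⟫ - ρ := by
      have hdist : ‖y - w‖ ≤ ρ := by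
        rw [← dist_eq_norm]; exact mem_closedBall.1 hy
      have h2 : |⟪y - w, θ₀⟫| ≤ ρ := by
        calc |⟪y - w, θ₀⟫| ≤ ‖y - w‖ * ‖θ₀‖ := abs_real_inner_le_norm _ _
          _ ≤ ρ := by rw [hθ₀, mul_one]; exact hdist
      have h3 : ⟪y, θ₀⟫ - ⟪w, θ₀⟫ = ⟪y - w, θ₀⟫ := by rw [inner_sub_left]
      have := neg_le_of_abs_le h2
      linarith
    have h4 : ⟪y, θ⟫ ≥ ⟪y, θ₀⟫ - R * (ε / (4 * (R + 1))) := by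
      have h5 : |⟪y, θ - θ₀⟫| ≤ R * (ε / (4 * (R + 1))) := by
        calc |⟪y, θ - θ₀⟫| ≤ ‖y‖ * ‖θ - θ₀‖ := abs_real_inner_le_norm _ _
          _ ≤ R * (ε / (4 * (R + 1))) := by
              apply mul_le_mul hyR hθr (norm_nonneg _) hR0
      have h6 : ⟪y, θ⟫ - ⟪y, θ₀⟫ = ⟪y, θ - θ₀⟫ := by rw [inner_sub_right]
      have := neg_le_of_abs_le h5
      linarith
    have h7 : R * (ε / (4 * (R + 1))) ≤ ε / 4 := by
      rw [mul_div_assoc', div_le_div_iff₀ (by positivity) (by positivity)]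
      nlinarith
    have h8 : ρ ≤ ε / 4 := min_le_right _ _
    linarith
  -- build the indicator density
  set g : EuclideanSpace ℝ (Fin n) → ℝ := B.indicator (fun _ => δ / cB) with hg
  have hgb : ∀ y, 0 ≤ g y ∧ g y ≤ 1 := by
    intro y
    rw [hg]
    by_cases hy : y ∈ B
    · rw [Set.indicator_of_mem hy]
      exact ⟨by positivity, (div_le_one hcB0).2 hδc⟩
    · rw [Set.indicator_of_notMem hy]
      exact ⟨le_refl _, zero_le_one⟩
  have hgm : AEStronglyMeasurable g (nuM K φ) :=
    (measurable_const.indicator measurableSet_closedBall).aestronglyMeasurable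
  have hgint : Integrable g (nuM K φ) := int_bdd hK hφ0 hφcont hgm hgb
  have hgmass : (∫ y, g y ∂(nuM K φ)) = δ := by
    rw [hg, integral_indicator_const _ measurableSet_closedBall, smul_eq_mul, measureReal_def, ← hB, ← hcB]
    field_simp
  have hgint2 : Integrable (fun y => g y • y) (nuM K φ) :=
    int_smul hK hφ0 hφcont hR hgm hgb
  have hmem : (δ⁻¹ • ∫ y, g y • y ∂(nuM K φ)) ∈ ulamW K φ δ := by
    rw [ulamW_eq K φ hδ]
    exact ⟨g, hgb, hgint, hgmass, hgint2, rfl⟩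
  have hsup : ⟪δ⁻¹ • ∫ y, g y • y ∂(nuM K φ), θ⟫ ≤ suppFn (ulamW K φ δ) θ :=
    le_csSup (ulam_bddAbove hK hR hφ0 hφcont hδ) (Set.mem_image_of_mem _ hmem)
  refine le_trans ?_ hsup
  rw [inner_point hgint2]
  have hval : (∫ y, g y * ⟪y, θ⟫ ∂(nuM K φ))
      = (δ / cB) * ∫ y in B, ⟪y, θ⟫ ∂(nuM K φ) := by
    have hrw : (fun y => g y * ⟪y, θ⟫)
        = B.indicator (fun y => (δ / cB) * ⟪y, θ⟫) := by
      funext y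
      rw [hg]
      by_cases hy : y ∈ B
      · rw [Set.indicator_of_mem hy, Set.indicator_of_mem hy]
      · rw [Set.indicator_of_notMem hy, Set.indicator_of_notMem hy, zero_mul]
    rw [hrw, integral_indicator measurableSet_closedBall, integral_const_mul]
  have hlow : (suppFn K θ₀ - ε) * cB ≤ ∫ y in B, ⟪y, θ⟫ ∂(nuM K φ) := by
    refine setIntegral_ge_of_const_le_real measurableSet_closedBall (measure_ne_top _ _)
      hBlow ((int_inner' hK hφ0 hφcont hR).integrableOn)
  rw [hval]
  have h9 : (δ / cB) * ((suppFn K θ₀ - ε) * cB) ≤ (δ / cB) * ∫ y in B, ⟪y, θ⟫ ∂(nuM K φ) :=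
    mul_le_mul_of_nonneg_left hlow (by positivity)
  have h10 : δ⁻¹ * ((δ / cB) * ((suppFn K θ₀ - ε) * cB)) = suppFn K θ₀ - ε := by
    field_simp
  calc suppFn K θ₀ - ε = δ⁻¹ * ((δ / cB) * ((suppFn K θ₀ - ε) * cB)) := h10.symm
    _ ≤ δ⁻¹ * ((δ / cB) * ∫ y in B, ⟪y, θ⟫ ∂(nuM K φ)) := by
        refine mul_le_mul_of_nonneg_left ?_ (inv_nonneg.2 hδ.le)
        exact h9
end Main7

/-- The support function `h_{M_δ(K,φ)}(θ)`, as a function of `(θ, δ)`, extends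
continuously to `δ = 0` on `S^{n-1} × [0, ∫_K φ]`, with value `h_K(θ)` at `δ = 0`. -/
theorem stmt4 (n : ℕ) (K : Set (EuclideanSpace ℝ (Fin n)))
    (hK : IsCompact K) (hKc : Convex ℝ K) (hKi : (interior K).Nonempty)
    (φ : EuclideanSpace ℝ (Fin n) → ℝ) (hφpos : ∀ x ∈ K, 0 < φ x)
    (hφcont : ContinuousOn φ K) :
    ContinuousOn
      (fun p : EuclideanSpace ℝ (Fin n) × ℝ =>
        if p.2 = 0 then suppFn K p.1 else suppFn (ulamW K φ p.2) p.1)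
      (Metric.sphere 0 1 ×ˢ Set.Icc 0 (∫ x in K, φ x)) := by
  set M := ∫ x in K, φ x with hM
  have hφ0 : ∀ x ∈ K, 0 ≤ φ x := fun x hx => (hφpos x hx).le
  have hne : K.Nonempty := hKi.mono interior_subset
  obtain ⟨R, hR⟩ : ∃ R : ℝ, K ⊆ closedBall 0 R := hK.isBounded.subset_closedBall 0
  have hR0 : 0 ≤ R := by
    obtain ⟨x, hx⟩ := hne
    have := hR hx
    simp only [mem_closedBall, dist_zero_right] at this
    linarith [norm_nonneg x]
  rw [Metric.continuousOn_iff]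
  rintro ⟨θ₀, δ₀⟩ ⟨hθ₀s, hδ₀0, hδ₀M⟩ ε hε
  dsimp only at hθ₀s hδ₀0 hδ₀M
  have hθ₀ : ‖θ₀‖ = 1 := mem_sphere_zero_iff_norm.1 hθ₀s
  rcases eq_or_lt_of_le hδ₀0 with hδ₀ | hδ₀
  · -- δ₀ = 0
    obtain ⟨r₁, hr₁, c, hc, hcap⟩ := H_cap hK hKc hKi hφpos hφcont hR hθ₀
      (half_pos hε)
    set r := min (min r₁ c) (ε / (2 * (R + 1))) with hr
    refine ⟨r, lt_min (lt_min hr₁ hc) (by positivity), ?_⟩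
    rintro ⟨θ, δ⟩ ⟨hθs, hδ0, hδM⟩ hdist
    dsimp only at hθs hδ0 hδM
    rw [Prod.dist_eq, max_lt_iff] at hdist
    obtain ⟨hd1, hd2⟩ := hdist
    rw [dist_eq_norm] at hd1
    rw [Real.dist_eq, ← hδ₀] at hd2
    dsimp only at hd2
    rw [sub_zero] at hd2
    have hθr : ‖θ - θ₀‖ < r := hd1
    have hKlip : suppFn K θ ≤ suppFn K θ₀ + ε / 2 ∧ suppFn K θ₀ ≤ suppFn K θ + ε / 2 := by
      have hb1 := suppFn_K_lipschitz hK hne hR (θ := θ) (θ' := θ₀)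
      have hb2 := suppFn_K_lipschitz hK hne hR (θ := θ₀) (θ' := θ)
      rw [norm_sub_rev θ₀ θ] at hb2
      have hsmall : R * ‖θ - θ₀‖ ≤ ε / 2 := by
        have h1 : ‖θ - θ₀‖ ≤ ε / (2 * (R + 1)) := le_trans hθr.le (min_le_right _ _)
        calc R * ‖θ - θ₀‖ ≤ R * (ε / (2 * (R + 1))) :=
              mul_le_mul_of_nonneg_left h1 hR0
          _ ≤ ε / 2 := by
              rw [mul_div_assoc', div_le_div_iff₀ (by positivity) (by positivity)]
              nlinarith
      exact ⟨by linarith, by linarith⟩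
    simp only [Real.dist_eq, ← hδ₀]
    rcases eq_or_lt_of_le hδ0 with h0 | h0
    · -- δ = 0
      rw [← h0]
      simp only [reduceIte]
      rw [abs_sub_lt_iff]
      constructor <;> [linarith [hKlip.1]; linarith [hKlip.2]]
    · -- δ > 0
      simp only [if_neg h0.ne', reduceIte]
      have hup : suppFn (ulamW K φ δ) θ ≤ suppFn K θ₀ + ε / 2 :=
        le_trans (Hfun_le_suppK hK hR hKi hφpos hφcont h0 hδM) (hKlip.1)
      have hlow : suppFn K θ₀ - ε / 2 ≤ suppFn (ulamW K φ δ) θ := by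
        refine hcap θ (le_trans hθr.le (le_trans (min_le_left _ _) (min_le_left _ _))) δ h0 ?_
        have : |δ| < c := lt_of_lt_of_le hd2 (le_trans (min_le_left _ _) (min_le_right _ _))
        rw [abs_of_pos h0] at this
        exact this.le
      rw [abs_sub_lt_iff]
      constructor <;> linarith
  · -- δ₀ > 0
    set C : ℝ := R + 4 * R / δ₀ + 1 with hC
    have hC0 : 0 < C := by positivity
    set r := min (δ₀ / 2) (ε / (2 * C)) with hr
    have hrpos : 0 < r := lt_min (by linarith) (by positivity)
    refine ⟨r, hrpos, ?_⟩
    rintro ⟨θ, δ⟩ ⟨hθs, hδ0, hδM⟩ hdist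
    dsimp only at hθs hδ0 hδM
    rw [Prod.dist_eq, max_lt_iff] at hdist
    obtain ⟨hd1, hd2⟩ := hdist
    rw [dist_eq_norm] at hd1
    rw [Real.dist_eq] at hd2
    have hdr : |δ - δ₀| < r := hd2
    have hδpos : 0 < δ := by
      have h1 : r ≤ δ₀ / 2 := min_le_left _ _
      have := abs_lt.1 hdr
      linarith [this.1]
    simp only [if_neg hδpos.ne', if_neg hδ₀.ne', Real.dist_eq]
    -- θ-Lipschitz part
    have hlip1 : suppFn (ulamW K φ δ) θ ≤ suppFn (ulamW K φ δ) θ₀ + R * ‖θ - θ₀‖ :=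
      H_lipθ hK hR hKi hφpos hφcont hδpos hδM
    have hlip2 : suppFn (ulamW K φ δ) θ₀ ≤ suppFn (ulamW K φ δ) θ + R * ‖θ - θ₀‖ := by
      have := H_lipθ hK hR hKi hφpos hφcont (θ := θ₀) (θ' := θ) hδpos hδM
      rw [norm_sub_rev θ₀ θ] at this
      exact this
    -- δ part
    have hδdiff : |suppFn (ulamW K φ δ) θ₀ - suppFn (ulamW K φ δ₀) θ₀|
        ≤ 4 * R / δ₀ * |δ - δ₀| := by
      rcases le_total δ δ₀ with hle | hle
      · have h1 := H_mono hK hR hKi hφpos hφcont (θ := θ₀) hδpos hle hδ₀M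
        have h2 := H_incr hK hR hKi hφpos hφcont hθ₀ hδpos hle hδ₀M
        rw [abs_sub_le_iff]
        constructor
        · have h3 : 2 * R * (δ₀ - δ) / δ₀ ≤ 4 * R / δ₀ * |δ - δ₀| := by
            rw [abs_of_nonpos (by linarith)]
            rw [div_mul_eq_mul_div, div_le_div_iff₀ hδ₀ hδ₀]
            nlinarith [mul_nonneg (mul_nonneg (mul_nonneg (by norm_num : (0:ℝ) ≤ 2) hR0)
              (by linarith : (0:ℝ) ≤ δ₀ - δ)) hδ₀.le]
          linarith
        · have h4 : (0:ℝ) ≤ 4 * R / δ₀ * |δ - δ₀| := by positivity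
          linarith
      · have h1 := H_mono hK hR hKi hφpos hφcont (θ := θ₀) hδ₀ hle hδM
        have h2 := H_incr hK hR hKi hφpos hφcont hθ₀ hδ₀ hle hδM
        rw [abs_sub_le_iff]
        constructor
        · have h4 : (0:ℝ) ≤ 4 * R / δ₀ * |δ - δ₀| := by positivity
          linarith
        · have h3 : 2 * R * (δ - δ₀) / δ ≤ 4 * R / δ₀ * |δ - δ₀| := by
            rw [abs_of_nonneg (by linarith)]
            have hδhalf : δ₀ / 2 ≤ δ := by linarith
            rw [div_mul_eq_mul_div, div_le_div_iff₀ hδpos hδ₀]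
            nlinarith [mul_le_mul_of_nonneg_left hδhalf
              (mul_nonneg (mul_nonneg (by norm_num : (0:ℝ) ≤ 2) hR0)
                (by linarith : (0:ℝ) ≤ δ - δ₀))]
          linarith
    -- combine
    have hθsmall : ‖θ - θ₀‖ < r := hd1
    have hfin : |suppFn (ulamW K φ δ) θ - suppFn (ulamW K φ δ₀) θ₀|
        ≤ R * ‖θ - θ₀‖ + 4 * R / δ₀ * |δ - δ₀| := by
      rw [abs_sub_le_iff] at hδdiff ⊢
      constructor
      · linarith [hδdiff.1]
      · linarith [hδdiff.2]
    have hRr : R * ‖θ - θ₀‖ ≤ R * r := mul_le_mul_of_nonneg_left hθsmall.le hR0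
    have hRr2 : 4 * R / δ₀ * |δ - δ₀| ≤ 4 * R / δ₀ * r :=
      mul_le_mul_of_nonneg_left hdr.le (by positivity)
    have hrC : r ≤ ε / (2 * C) := min_le_right _ _
    calc |suppFn (ulamW K φ δ) θ - suppFn (ulamW K φ δ₀) θ₀|
        ≤ R * r + 4 * R / δ₀ * r := by linarith
      _ < C * r := by nlinarith [hrpos]
      _ ≤ C * (ε / (2 * C)) := mul_le_mul_of_nonneg_left hrC hC0.le
      _ = ε / 2 := by field_simp
      _ < ε := by linarith
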